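/- Let τ_K, τ_M > 1 with τ_K⁻¹+τ_M⁻¹ < 1, λ± := (√(τ_M⁻¹(1−τ_K⁻¹)) ± √(τ_K⁻¹(1−τ_M⁻¹)))², and 𝒢(z) := [τ_M⁻¹+τ_K⁻¹−z+√((z−λ₋)(z−λ₊))]/(2z(z−1)) + 1/(zτ_K) (positive square root for z > λ₊). Define Q_x(z) := −[1 − 2τ_K⁻¹ − (1/z)(τ_M⁻¹−τ_K⁻¹) − (1−z)𝒢(z)]/[1 − τ_M⁻¹ − zτ_K⁻¹ − z(1−z)𝒢(z)] and Q_y(z) := −[1 − τ_K⁻¹ − τ_M⁻¹ − (1−z)𝒢(z)]/[1 − τ_M⁻¹ − zτ_K⁻¹ − z(1−z)𝒢(z)]. Then for every ρ² with 1/√((τ_M−1)(τ_K−1)) < ρ² ≤ 1, evaluating at z_ρ := ((τ_K−1)ρ²+1)((τ_M−1)ρ²+1)/(ρ²τ_Kτ_M) gives Q_x(z_ρ) = −ρ²τ_M/(ρ²(τ_M−1) + 1) and Q_y(z_ρ) = −ρ²τ_K/(ρ²(τ_K−1) + 1). -/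

import Mathlib

open MeasureTheory ProbabilityTheory Filter Matrix

noncomputable section

/-- Euclidean dot product on `Fin n → ℝ`. -/
def dotR {n : ℕ} (a b : Fin n → ℝ) : ℝ := ∑ i, a i * b i

/-- The (cross-)covariance matrix `E[X Yᵀ]` of two mean-zero random vectors. -/
def covMat {Ω : Type} [MeasurableSpace Ω] (μ : Measure Ω) {n m : ℕ}
    (X : Ω → Fin n → ℝ) (Y : Ω → Fin m → ℝ) : Matrix (Fin n) (Fin m) ℝ :=
  Matrix.of fun i j => ∫ ω, X ω i * Y ω j ∂μ

/-- A random vector is centered (jointly) Gaussian if every linear functional of it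
is a centered one-dimensional Gaussian. -/
def IsCenteredGaussianVec {Ω : Type} [MeasurableSpace Ω] (μ : Measure Ω)
    {n : ℕ} (X : Ω → Fin n → ℝ) : Prop :=
  ∀ l : Fin n → ℝ, ∃ v : NNReal,
    Measure.map (fun ω => dotR l (X ω)) μ = gaussianReal 0 v

/-- Fourth-moment Gaussian family of random variables: mean zero and the Wick rule
for all fourth joint moments. -/
def FourthMomentGaussian {Ω : Type} [MeasurableSpace Ω] (μ : Measure Ω)
    {ι : Type} (X : ι → Ω → ℝ) : Prop :=
  (∀ i, ∫ ω, X i ω ∂μ = 0) ∧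
  ∀ i j k l, ∫ ω, X i ω * X j ω * X k ω * X l ω ∂μ =
    (∫ ω, X i ω * X j ω ∂μ) * (∫ ω, X k ω * X l ω ∂μ)
    + (∫ ω, X i ω * X k ω ∂μ) * (∫ ω, X j ω * X l ω ∂μ)
    + (∫ ω, X i ω * X l ω ∂μ) * (∫ ω, X j ω * X k ω ∂μ)

/-- Convergence in probability to a constant, along a sequence of probability spaces. -/
def TendstoInProb {Ω : ℕ → Type} [∀ S, MeasurableSpace (Ω S)]
    (μ : ∀ S, Measure (Ω S)) (X : ∀ S, Ω S → ℝ) (c : ℝ) : Prop :=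
  ∀ ε : ℝ, 0 < ε →
    Tendsto (fun S => μ S {ω | ε ≤ |X S ω - c|}) atTop (nhds 0)

/-- `lam` is an antitone enumeration (with multiplicity) of the eigenvalues of `T`. -/
def EigenvaluesOf {n : ℕ} (T : Matrix (Fin n) (Fin n) ℝ) (lam : Fin n → ℝ) : Prop :=
  Antitone lam ∧ T.charpoly = ∏ i, (Polynomial.X - Polynomial.C (lam i))

/-- The `K × K` matrix whose eigenvalues are the squared sample canonical
correlations between the rows of `U` and of `V`. -/
def ccaMatrix {K M S : ℕ} (U : Matrix (Fin K) (Fin S) ℝ) (V : Matrix (Fin M) (Fin S) ℝ) :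
    Matrix (Fin K) (Fin K) ℝ :=
  (U * Uᵀ)⁻¹ * (U * Vᵀ) * (V * Vᵀ)⁻¹ * (V * Uᵀ)

/-- The companion `M × M` matrix. -/
def ccaMatrixV {K M S : ℕ} (U : Matrix (Fin K) (Fin S) ℝ) (V : Matrix (Fin M) (Fin S) ℝ) :
    Matrix (Fin M) (Fin M) ℝ :=
  (V * Vᵀ)⁻¹ * (V * Uᵀ) * (U * Uᵀ)⁻¹ * (U * Vᵀ)

/-- `λ₊` resp. `λ₋`. -/
def lambdaPlus (τK τM : ℝ) : ℝ :=
  (Real.sqrt (τM⁻¹ * (1 - τK⁻¹)) + Real.sqrt (τK⁻¹ * (1 - τM⁻¹)))^2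

def lambdaMinus (τK τM : ℝ) : ℝ :=
  (Real.sqrt (τM⁻¹ * (1 - τK⁻¹)) - Real.sqrt (τK⁻¹ * (1 - τM⁻¹)))^2

/-- the detection threshold `ρ_c²`. -/
def rhoc2 (τK τM : ℝ) : ℝ := 1 / Real.sqrt ((τM - 1) * (τK - 1))

/-- the outlier location `z_ρ` (as a function of `ρ²`). -/
def zrho (τK τM ρ2 : ℝ) : ℝ :=
  ((τK - 1) * ρ2 + 1) * ((τM - 1) * ρ2 + 1) / (ρ2 * τK * τM)

/-- limit of `sin² θ_x`. -/
def sinx2 (τK τM ρ2 : ℝ) : ℝ :=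
  (1 - ρ2) * (τK - 1) / ((τM - 1) * (τK - 1) * ρ2 - 1) *
    (((τM - 1) * ρ2 + 1) / ((τK - 1) * ρ2 + 1))

/-- limit of `sin² θ_y`. -/
def siny2 (τK τM ρ2 : ℝ) : ℝ :=
  (1 - ρ2) * (τM - 1) / ((τM - 1) * (τK - 1) * ρ2 - 1) *
    (((τK - 1) * ρ2 + 1) / ((τM - 1) * ρ2 + 1))


/-- The modified Stieltjes transform of the Wachter distribution (explicit formula,
positive branch of the square root). -/
def calG (τK τM z : ℝ) : ℝ :=
  (τM⁻¹ + τK⁻¹ - z +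
      Real.sqrt ((z - lambdaMinus τK τM) * (z - lambdaPlus τK τM))) / (2 * z * (z - 1))
    + 1 / (z * τK)

/-- The limiting function `Q_x`. -/
def Qx (τK τM z : ℝ) : ℝ :=
  -((1 - 2 * τK⁻¹ - (1 / z) * (τM⁻¹ - τK⁻¹) - (1 - z) * calG τK τM z) /
    (1 - τM⁻¹ - z * τK⁻¹ - z * (1 - z) * calG τK τM z))

/-- The limiting function `Q_y`. -/
def Qy (τK τM z : ℝ) : ℝ :=
  -((1 - τK⁻¹ - τM⁻¹ - (1 - z) * calG τK τM z) /
    (1 - τM⁻¹ - z * τK⁻¹ - z * (1 - z) * calG τK τM z))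

set_option maxHeartbeats 2000000 in
/-- Lemma B.3 of the paper: evaluation of `Q_x` and `Q_y` at `z_ρ`. -/
theorem Qx_Qy_at_zrho
    (τK τM : ℝ) (hτK : 1 < τK) (hτM : 1 < τM) (hτ : τK⁻¹ + τM⁻¹ < 1) :
    ∀ ρ2 : ℝ, rhoc2 τK τM < ρ2 → ρ2 ≤ 1 →
      Qx τK τM (zrho τK τM ρ2) = -(ρ2 * τM) / (ρ2 * (τM - 1) + 1) ∧
      Qy τK τM (zrho τK τM ρ2) = -(ρ2 * τK) / (ρ2 * (τK - 1) + 1) := by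
  intro ρ2 hlo hhi
  have hK0 : (0:ℝ) < τK := lt_trans one_pos hτK
  have hM0 : (0:ℝ) < τM := lt_trans one_pos hτM
  have hKne : τK ≠ 0 := ne_of_gt hK0
  have hMne : τM ≠ 0 := ne_of_gt hM0
  have ha0 : 0 < τK⁻¹ := inv_pos.mpr hK0
  have hb0 : 0 < τM⁻¹ := inv_pos.mpr hM0
  have ha1 : τK⁻¹ < 1 := by
    rw [inv_lt_one_iff₀]; right; exact hτK
  have hb1 : τM⁻¹ < 1 := by
    rw [inv_lt_one_iff₀]; right; exact hτM
  have hW : 0 < (τM - 1) * (τK - 1) := by nlinarith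
  have haa : (1:ℝ) - τK⁻¹ ≠ 0 := by intro h; nlinarith
  have hbb : (1:ℝ) - τM⁻¹ ≠ 0 := by intro h; nlinarith
  have h2 : (0:ℝ) < (1 - τK⁻¹) * (1 - τM⁻¹) := by nlinarith
  have hrc0 : 0 < rhoc2 τK τM := by
    unfold rhoc2
    exact div_pos one_pos (Real.sqrt_pos.mpr hW)
  have hr0 : 0 < ρ2 := lt_trans hrc0 hlo
  have hrne : ρ2 ≠ 0 := ne_of_gt hr0
  -- the threshold in inverse form
  have hcval : τK⁻¹ * τM⁻¹ / ((1 - τK⁻¹) * (1 - τM⁻¹)) = ((τM - 1) * (τK - 1))⁻¹ := by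
    refine eq_inv_of_mul_eq_one_right ?_
    rw [mul_comm, div_mul_eq_mul_div, div_eq_one_iff_eq (ne_of_gt h2)]
    field_simp
  have hc0 : 0 ≤ τK⁻¹ * τM⁻¹ / ((1 - τK⁻¹) * (1 - τM⁻¹)) :=
    le_of_lt (div_pos (by positivity) h2)
  have hrc : rhoc2 τK τM = Real.sqrt (τK⁻¹ * τM⁻¹ / ((1 - τK⁻¹) * (1 - τM⁻¹))) := by
    rw [hcval, Real.sqrt_inv, rhoc2, one_div]
  have hr2 : τK⁻¹ * τM⁻¹ / ((1 - τK⁻¹) * (1 - τM⁻¹)) < ρ2 ^ 2 := by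
    have h1 : Real.sqrt (τK⁻¹ * τM⁻¹ / ((1 - τK⁻¹) * (1 - τM⁻¹))) < ρ2 := by
      rw [← hrc]; exact hlo
    calc τK⁻¹ * τM⁻¹ / ((1 - τK⁻¹) * (1 - τM⁻¹))
        = (Real.sqrt (τK⁻¹ * τM⁻¹ / ((1 - τK⁻¹) * (1 - τM⁻¹)))) ^ 2 := (Real.sq_sqrt hc0).symm
      _ < ρ2 ^ 2 := by
          exact pow_lt_pow_left₀ h1 (Real.sqrt_nonneg _) (by norm_num)
  have hE2pos : 0 < (1 - τK⁻¹) * (1 - τM⁻¹) * ρ2 ^ 2 - τK⁻¹ * τM⁻¹ := by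
    have h3 := (div_lt_iff₀ h2).mp hr2
    nlinarith [h3]
  -- eigenvalue sum and product
  have hBx : (0:ℝ) ≤ τM⁻¹ * (1 - τK⁻¹) := by nlinarith
  have hBy : (0:ℝ) ≤ τK⁻¹ * (1 - τM⁻¹) := by nlinarith
  have hx2 : Real.sqrt (τM⁻¹ * (1 - τK⁻¹)) ^ 2 = τM⁻¹ * (1 - τK⁻¹) := Real.sq_sqrt hBx
  have hy2 : Real.sqrt (τK⁻¹ * (1 - τM⁻¹)) ^ 2 = τK⁻¹ * (1 - τM⁻¹) := Real.sq_sqrt hBy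
  have hsum : lambdaMinus τK τM + lambdaPlus τK τM
      = 2 * (τM⁻¹ * (1 - τK⁻¹) + τK⁻¹ * (1 - τM⁻¹)) := by
    unfold lambdaMinus lambdaPlus
    linear_combination 2 * hx2 + 2 * hy2
  have hprod : lambdaMinus τK τM * lambdaPlus τK τM = (τM⁻¹ - τK⁻¹) ^ 2 := by
    unfold lambdaMinus lambdaPlus
    linear_combination (Real.sqrt (τM⁻¹ * (1 - τK⁻¹)) ^ 2
        - Real.sqrt (τK⁻¹ * (1 - τM⁻¹)) ^ 2 + τM⁻¹ * (1 - τK⁻¹) - τK⁻¹ * (1 - τM⁻¹))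
      * (hx2 - hy2)
  set z := zrho τK τM ρ2 with hzdef
  have hzval : z = ((τK - 1) * ρ2 + 1) * ((τM - 1) * ρ2 + 1) / (ρ2 * τK * τM) := by
    rw [hzdef, zrho]
  have hp0 : 0 < (τK - 1) * ρ2 + 1 := by nlinarith
  have hq0 : 0 < (τM - 1) * ρ2 + 1 := by nlinarith
  have hpne : (τK - 1) * ρ2 + 1 ≠ 0 := ne_of_gt hp0
  have hqne : (τM - 1) * ρ2 + 1 ≠ 0 := ne_of_gt hq0
  have hz0 : 0 < z := by rw [hzval]; positivity
  have hzne : z ≠ 0 := ne_of_gt hz0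
  have harg : (z - lambdaMinus τK τM) * (z - lambdaPlus τK τM)
      = (((1 - τK⁻¹) * (1 - τM⁻¹) * ρ2 ^ 2 - τK⁻¹ * τM⁻¹) / ρ2) ^ 2 := by
    have e1 : (z - lambdaMinus τK τM) * (z - lambdaPlus τK τM)
        = z ^ 2 - (lambdaMinus τK τM + lambdaPlus τK τM) * z
          + lambdaMinus τK τM * lambdaPlus τK τM := by ring
    rw [e1, hsum, hprod, hzval]
    field_simp
    ring
  have hsqrt : Real.sqrt ((z - lambdaMinus τK τM) * (z - lambdaPlus τK τM))
      = ((1 - τK⁻¹) * (1 - τM⁻¹) * ρ2 ^ 2 - τK⁻¹ * τM⁻¹) / ρ2 := by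
    rw [harg, Real.sqrt_sq (by positivity)]
  rcases eq_or_lt_of_le hhi with h1 | h1
  · -- ρ2 = 1, z = 1
    subst h1
    have hz1 : z = 1 := by rw [hzval]; field_simp; ring
    have hG1 : calG τK τM z = τK⁻¹ := by
      unfold calG
      rw [hz1]
      rw [show (2:ℝ) * 1 * (1 - 1) = 0 by ring, div_zero, zero_add, one_mul, one_div]
    have hdne : 1 - τM⁻¹ - τK⁻¹ ≠ 0 := by
      intro h; nlinarith
    constructor
    · rw [Qx, hG1, hz1]
      rw [show (1:ℝ) - 2 * τK⁻¹ - 1 / 1 * (τM⁻¹ - τK⁻¹) - (1 - 1) * τK⁻¹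
            = 1 - τM⁻¹ - τK⁻¹ by ring,
          show (1:ℝ) - τM⁻¹ - 1 * τK⁻¹ - 1 * (1 - 1) * τK⁻¹ = 1 - τM⁻¹ - τK⁻¹ by ring,
          div_self hdne]
      rw [eq_div_iff (by nlinarith : (1:ℝ) * (τM - 1) + 1 ≠ 0)]
      ring
    · rw [Qy, hG1, hz1]
      rw [show (1:ℝ) - τK⁻¹ - τM⁻¹ - (1 - 1) * τK⁻¹ = 1 - τM⁻¹ - τK⁻¹ by ring,
          show (1:ℝ) - τM⁻¹ - 1 * τK⁻¹ - 1 * (1 - 1) * τK⁻¹ = 1 - τM⁻¹ - τK⁻¹ by ring,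
          div_self hdne]
      rw [eq_div_iff (by nlinarith : (1:ℝ) * (τK - 1) + 1 ≠ 0)]
      ring
  · -- ρ2 < 1
    have hEpos : 0 < (1 - τK⁻¹) * (1 - τM⁻¹) * ρ2 - τK⁻¹ * τM⁻¹ := by nlinarith
    have hEne : (1 - τK⁻¹) * (1 - τM⁻¹) * ρ2 - τK⁻¹ * τM⁻¹ ≠ 0 := ne_of_gt hEpos
    have hEK : 1 < (τK - 1) * (τM - 1) * ρ2 := by
      have h3 : (1 - τK⁻¹) * τK = τK - 1 := by field_simp
      have h4 : (1 - τM⁻¹) * τM = τM - 1 := by field_simp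
      have h5 : τK⁻¹ * τK = 1 := inv_mul_cancel₀ hKne
      have h6 : τM⁻¹ * τM = 1 := inv_mul_cancel₀ hMne
      nlinarith [mul_pos hK0 hM0, hEpos]
    have hzlt : z < 1 := by
      rw [hzval, div_lt_one (by positivity)]
      nlinarith [hEK, h1]
    have hz1ne : z ≠ 1 := ne_of_lt hzlt
    have hzm1 : z - 1 ≠ 0 := sub_ne_zero.mpr hz1ne
    have hEbpos : 0 < (τK - 1) * (τM - 1) * ρ2 - 1 := by nlinarith [hEK]
    have hEbne : (τK - 1) * (τM - 1) * ρ2 - 1 ≠ 0 := ne_of_gt hEbpos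
    have hfac : ((τK - 1) * ρ2 + 1) * ((τM - 1) * ρ2 + 1) - ρ2 * τK * τM ≠ 0 := by
      have : ((τK - 1) * ρ2 + 1) * ((τM - 1) * ρ2 + 1) - ρ2 * τK * τM
          = ((τK - 1) * (τM - 1) * ρ2 - 1) * (ρ2 - 1) := by ring
      rw [this]
      exact mul_ne_zero hEbne (by nlinarith)
    have hpqne : ((τK - 1) * ρ2 + 1) * ((τM - 1) * ρ2 + 1) ≠ 0 := mul_ne_zero hpne hqne
    have hrKM : ρ2 * τK * τM ≠ 0 := by positivity
    have h2z : 2 * z * (z - 1) ≠ 0 :=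
      mul_ne_zero (mul_ne_zero two_ne_zero hzne) hzm1
    have hzK : z * τK ≠ 0 := mul_ne_zero hzne hKne
    have hG : calG τK τM z
        = τM * (τK - 1) * ρ2
          / (((τK - 1) * (τM - 1) * ρ2 - 1) * ((τK - 1) * ρ2 + 1)) := by
      rw [calG, hsqrt]
      rw [div_add_div _ _ h2z hzK, div_eq_div_iff (mul_ne_zero h2z hzK)
            (mul_ne_zero hEbne hpne)]
      rw [hzval]
      field_simp
      ring
    have hD : 1 - τM⁻¹ - z * τK⁻¹ - z * (1 - z) * calG τK τM z
        = ((τK - 1) * (τM - 1) * ρ2 - 1) / (ρ2 * τK * τM) := by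
      rw [hG, hzval]
      generalize hE : (τK - 1) * (τM - 1) * ρ2 - 1 = E at hEbne ⊢
      field_simp
      subst hE
      ring
    have hDne : ((τK - 1) * (τM - 1) * ρ2 - 1) / (ρ2 * τK * τM) ≠ 0 :=
      div_ne_zero hEbne hrKM
    have hpne2 : 1 + (τK * ρ2 - ρ2) ≠ 0 := by intro h; exact hpne (by linarith)
    have hqne2 : 1 + (τM * ρ2 - ρ2) ≠ 0 := by intro h; exact hqne (by linarith)
    have hpne3 : 1 - ρ2 + ρ2 * τK ≠ 0 := by intro h; exact hpne (by linarith)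
    have hqne3 : 1 - ρ2 + ρ2 * τM ≠ 0 := by intro h; exact hqne (by linarith)
    have hpne4 : ρ2 * (τK - 1) + 1 ≠ 0 := by intro h; exact hpne (by linarith)
    have hqne4 : ρ2 * (τM - 1) + 1 ≠ 0 := by intro h; exact hqne (by linarith)
    constructor
    · rw [Qx, hD, hG, hzval]
      generalize hE : (τK - 1) * (τM - 1) * ρ2 - 1 = E at hEbne ⊢
      field_simp
      subst hE
      ring
    · rw [Qy, hD, hG, hzval]
      generalize hE : (τK - 1) * (τM - 1) * ρ2 - 1 = E at hEbne ⊢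
      field_simp
      subst hE
      ring
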